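/- The flat tetrahedrons cover the hyperplane: H = {v ∈ ℝ⁴ : v₁+v₂+v₃+v₄ = 0} equals the union, over all a ∈ ℤ⁴ and all pairwise distinct i,j,k ∈ {1,2,3,4}, of the projected tetrahedrons π(T(a;i,j,k)). -/

import Mathlib

noncomputable section

/-- Ambient space ℝ⁴. -/
abbrev E4 := EuclideanSpace ℝ (Fin 4)

/-- Standard basis vector eᵢ of ℝ⁴. -/
def ee4 (i : Fin 4) : E4 := EuclideanSpace.single i 1

/-- 𝟙 = e₁ + e₂ + e₃ + e₄. -/
def ones4 : E4 := ∑ i, ee4 i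

/-- Orthogonal projection π onto the hyperplane H = {v ∈ ℝ⁴ : v₁+v₂+v₃+v₄ = 0},
    given by π(v) = v − ((v₁+v₂+v₃+v₄)/4)·𝟙. -/
def proj4 (v : E4) : E4 := v - ((∑ i, v i) / 4) • ones4

/-- A lattice point of ℤ⁴ viewed in ℝ⁴. -/
def toE4 (a : Fin 4 → ℤ) : E4 := WithLp.toLp 2 (fun n => (a n : ℝ))

/-- Slant tetrahedron T(a;i,j,k) = conv{a, a+eᵢ, a+eᵢ+eⱼ, a+eᵢ+eⱼ+e_k}. -/
def slant4 (a : Fin 4 → ℤ) (i j k : Fin 4) : Set E4 :=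
  convexHull ℝ {toE4 a, toE4 a + ee4 i, toE4 a + ee4 i + ee4 j,
    toE4 a + ee4 i + ee4 j + ee4 k}

/-- Flat tetrahedron: the image π(T(a;i,j,k)). -/
def flat4 (a : Fin 4 → ℤ) (i j k : Fin 4) : Set E4 := proj4 '' slant4 a i j k

theorem ee4_apply (i n : Fin 4) : ee4 i n = if n = i then 1 else 0 :=
  EuclideanSpace.single_apply i 1 n

theorem ones4_apply (n : Fin 4) : ones4 n = 1 := by
  simp [ones4, ee4, Fin.sum_univ_four, EuclideanSpace.single_apply]
  fin_cases n <;> norm_num [Fin.ext_iff] <;> decide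

theorem mem_slant4 (a : Fin 4 → ℤ) (i j k : Fin 4) {c1 c2 c3 : ℝ}
    (h1 : c1 ≤ 1) (h12 : c2 ≤ c1) (h23 : c3 ≤ c2) (h3 : 0 ≤ c3) :
    toE4 a + c1 • ee4 i + c2 • ee4 j + c3 • ee4 k ∈ slant4 a i j k := by
  have key : toE4 a + c1 • ee4 i + c2 • ee4 j + c3 • ee4 k
      = (1 - c1) • toE4 a + (c1 - c2) • (toE4 a + ee4 i)
        + (c2 - c3) • (toE4 a + ee4 i + ee4 j)
        + c3 • (toE4 a + ee4 i + ee4 j + ee4 k) := by module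
  have hconv := convex_convexHull ℝ ({toE4 a, toE4 a + ee4 i,
    toE4 a + ee4 i + ee4 j, toE4 a + ee4 i + ee4 j + ee4 k} : Set E4)
  have hW : ∀ m : Fin 4, 0 ≤ ![1 - c1, c1 - c2, c2 - c3, c3] m := by
    intro m
    fin_cases m
    · show (0:ℝ) ≤ 1 - c1; linarith
    · show (0:ℝ) ≤ c1 - c2; linarith
    · show (0:ℝ) ≤ c2 - c3; linarith
    · exact h3
  have hmem := hconv.sum_mem (t := Finset.univ)
    (w := ![1 - c1, c1 - c2, c2 - c3, c3])
    (z := ![toE4 a, toE4 a + ee4 i, toE4 a + ee4 i + ee4 j,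
      toE4 a + ee4 i + ee4 j + ee4 k])
    (fun m _ => hW m)
    (by simp [Fin.sum_univ_four]; try ring)
    (fun m _ => by
      fin_cases m <;> exact subset_convexHull ℝ _ (by simp [Set.mem_insert_iff]))
  rw [slant4, key]
  simpa [Fin.sum_univ_four] using hmem

/-- the flat tetrahedrons cover the hyperplane H. -/
theorem stmt11 :
    {v : E4 | ∑ n, v n = 0} =
      ⋃ (a : Fin 4 → ℤ) (i : Fin 4) (j : Fin 4) (k : Fin 4)
        (_ : i ≠ j) (_ : i ≠ k) (_ : j ≠ k), flat4 a i j k := by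
  ext v
  simp only [Set.mem_setOf_eq, Set.mem_iUnion]
  constructor
  · intro hv
    set w : E4 := v - (v 0) • ones4 with hwdef
    set a : Fin 4 → ℤ := fun n => ⌊w n⌋ with ha
    set f : Fin 4 → ℝ := fun n => Int.fract (w n) with hfdef
    have hwn : ∀ n, w n = v n - v 0 := by
      intro n
      simp [hwdef, ones4_apply]
    have hw0 : w 0 = 0 := by simp [hwn]
    have hf0 : f 0 = 0 := by simp [hfdef, hw0]
    have hfnn : ∀ n, 0 ≤ f n := fun n => Int.fract_nonneg _
    have hfle : ∀ n, f n ≤ 1 := fun n => (Int.fract_lt_one _).le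
    have hproj : proj4 w = v := by
      have hsum : ∑ m, w m = -(4 * v 0) := by
        simp only [Fin.sum_univ_four, hwn]
        have h4 : ∑ m, v m = 0 := hv
        rw [Fin.sum_univ_four] at h4
        linarith
      ext n
      simp [proj4, hsum, ones4_apply, hwn]
      rw [hv]; ring
    have happ : ∀ n, w n = (a n : ℝ) + f n := fun n =>
      (Int.floor_add_fract (w n)).symm
    have heq123 : w = toE4 a + f 1 • ee4 1 + f 2 • ee4 2 + f 3 • ee4 3 := by
      ext n
      have hc : (toE4 a + f 1 • ee4 1 + f 2 • ee4 2 + f 3 • ee4 3) n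
          = (a n : ℝ) + (f 1 * ee4 1 n + f 2 * ee4 2 n + f 3 * ee4 3 n) := by
        simp [toE4]; ring
      rw [hc, happ n]
      congr 1
      fin_cases n <;> simp (config := { decide := true }) [ee4_apply, hf0]
    have main : ∀ i j k : Fin 4, i ≠ j → i ≠ k → j ≠ k →
        w = toE4 a + f i • ee4 i + f j • ee4 j + f k • ee4 k →
        f j ≤ f i → f k ≤ f j →
        ∃ (a' : Fin 4 → ℤ) (i' : Fin 4) (j' : Fin 4) (k' : Fin 4)
          (_ : i' ≠ j') (_ : i' ≠ k') (_ : j' ≠ k'), v ∈ flat4 a' i' j' k' := by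
      intro i j k hij hik hjk he h1 h2
      exact ⟨a, i, j, k, hij, hik, hjk, w,
        by rw [he]; exact mem_slant4 a i j k (hfle i) h1 h2 (hfnn k), hproj⟩
    rcases le_total (f 1) (f 2) with h12 | h12 <;>
      rcases le_total (f 1) (f 3) with h13 | h13 <;>
      rcases le_total (f 2) (f 3) with h23 | h23
    · exact main 3 2 1 (by decide) (by decide) (by decide)
        (by rw [heq123]; module) h23 h12
    · exact main 2 3 1 (by decide) (by decide) (by decide)
        (by rw [heq123]; module) h23 h13
    · exact main 2 1 3 (by decide) (by decide) (by decide)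
        (by rw [heq123]; module) h12 h13
    · exact main 2 1 3 (by decide) (by decide) (by decide)
        (by rw [heq123]; module) h12 h13
    · exact main 3 1 2 (by decide) (by decide) (by decide)
        (by rw [heq123]; module) h13 h12
    · exact main 3 1 2 (by decide) (by decide) (by decide)
        (by rw [heq123]; module) h13 h12
    · exact main 1 3 2 (by decide) (by decide) (by decide)
        (by rw [heq123]; module) h13 h23
    · exact main 1 2 3 (by decide) (by decide) (by decide)
        heq123 h12 h23
  · rintro ⟨a, i, j, k, _, _, _, u, -, rfl⟩
    simp only [proj4, Fin.sum_univ_four]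
    have h0 := ones4_apply (0 : Fin 4)
    have h1 := ones4_apply (1 : Fin 4)
    have h2 := ones4_apply (2 : Fin 4)
    have h3 := ones4_apply (3 : Fin 4)
    simp [h0, h1, h2, h3, Fin.sum_univ_four]
    try ring
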